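/- Let H be a complex inner product space (positive definite Hermitian form), and let Ω_m (m ∈ ℤ) be linear operators on H such that the Hermitian adjoint of Ω_{-m} is Ω_m for every m. Suppose Ω_KW is an operator satisfying -4 Ω_KW = (1/2)Ω₀² + Σ_{m=1}^{M} Ω_{-m}Ω_m (finite sum sufficing on a given vector). If v ∈ H satisfies Ω_KW(v) = 0, then Ω_m(v) = 0 for all m ≥ 0. -/

import Mathlib

/-- Positivity argument: if operators `Ω_m` on a complex inner product space satisfy
`adjoint(Ω_{-m}) = Ω_m` (i.e. `⟪Ω_{-m}x, y⟫ = ⟪x, Ω_m y⟫`), and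
`-4·Ω_KW v = (1/2)Ω₀(Ω₀ v) + Σ_{m=1}^{M} Ω_{-m}(Ω_m v)` on a vector `v` with
`Ω_KW v = 0`, then `Ω_m v = 0` for all `m` with `0 ≤ m ≤ M`. -/
theorem casimir_positivity {H : Type*} [NormedAddCommGroup H] [InnerProductSpace ℂ H]
    (Ω : ℤ → H →ₗ[ℂ] H)
    (hadj : ∀ (m : ℤ) (x y : H), (inner ℂ (Ω (-m) x) y : ℂ) = inner ℂ x (Ω m y))
    (ΩKW : H →ₗ[ℂ] H) (M : ℕ) (v : H)
    (hcasimir : (-4 : ℂ) • ΩKW v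
        = (1 / 2 : ℂ) • Ω 0 (Ω 0 v) + ∑ m ∈ Finset.Icc 1 M, Ω (-(m : ℤ)) (Ω (m : ℤ) v))
    (hv : ΩKW v = 0) :
    ∀ m : ℕ, m ≤ M → Ω (m : ℤ) v = 0 := by
  have hadj' : ∀ (m : ℤ), (inner ℂ v (Ω (-m) (Ω m v)) : ℂ) = inner ℂ (Ω m v) (Ω m v) := by
    intro m
    have := hadj (-m) v (Ω m v)
    simpa using this.symm
  have key : (0 : ℂ) = (1/2 : ℂ) * ((‖Ω 0 v‖ : ℂ))^2
      + ∑ m ∈ Finset.Icc 1 M, ((‖Ω (m : ℤ) v‖ : ℂ))^2 := by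
    have h0 : (inner ℂ v ((-4 : ℂ) • ΩKW v) : ℂ) = 0 := by
      rw [hv]; simp
    rw [hcasimir] at h0
    rw [inner_add_right, inner_smul_right, inner_sum] at h0
    have e0 : (inner ℂ v (Ω 0 (Ω 0 v)) : ℂ) = ((‖Ω 0 v‖ : ℂ))^2 := by
      have := hadj' 0
      simpa [inner_self_eq_norm_sq_to_K] using this
    have em : ∀ m ∈ Finset.Icc 1 M,
        (inner ℂ v (Ω (-(m : ℤ)) (Ω (m : ℤ) v)) : ℂ) = ((‖Ω (m : ℤ) v‖ : ℂ))^2 := by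
      intro m _
      have := hadj' (m : ℤ)
      simpa [inner_self_eq_norm_sq_to_K] using this
    rw [e0, Finset.sum_congr rfl em] at h0
    exact h0.symm
  have keyR : (0 : ℝ) = (1/2 : ℝ) * ‖Ω 0 v‖^2 + ∑ m ∈ Finset.Icc 1 M, ‖Ω (m : ℤ) v‖^2 := by
    have := congrArg Complex.re key
    simpa [Complex.add_re, Complex.mul_re, ← Complex.ofReal_pow] using this
  have hsum_nonneg : ∀ m ∈ Finset.Icc 1 M, (0:ℝ) ≤ ‖Ω (m : ℤ) v‖^2 := by
    intro m _; positivity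
  have h1 : (1/2 : ℝ) * ‖Ω 0 v‖^2 = 0 ∧ ∑ m ∈ Finset.Icc 1 M, ‖Ω (m : ℤ) v‖^2 = 0 := by
    have hA : (0:ℝ) ≤ (1/2 : ℝ) * ‖Ω 0 v‖^2 := by positivity
    have hB : (0:ℝ) ≤ ∑ m ∈ Finset.Icc 1 M, ‖Ω (m : ℤ) v‖^2 :=
      Finset.sum_nonneg hsum_nonneg
    constructor <;> linarith [keyR]
  intro m hm
  rcases Nat.eq_zero_or_pos m with h | h
  · subst h
    have : ‖Ω (0 : ℤ) v‖ = 0 := by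
      have := h1.1
      nlinarith [norm_nonneg (Ω (0:ℤ) v)]
    simpa using norm_eq_zero.mp this
  · have := (Finset.sum_eq_zero_iff_of_nonneg hsum_nonneg).mp h1.2.symm.symm m
      (Finset.mem_Icc.mpr ⟨h, hm⟩)
    have : ‖Ω (m : ℤ) v‖ = 0 := by nlinarith [norm_nonneg (Ω (m:ℤ) v)]
    exact norm_eq_zero.mp this
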